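/- For $x \in \mathbb{R}^3$ with $|x| > 8$, the integral $J(x) := \int_0^1 \int_{\mathbb{R}^3} \frac{1}{(|x-y| + \sqrt{1-s})^3} \cdot \frac{1}{(|y| + \sqrt{s})^3} \, dy \, ds$ satisfies $J(x) \le C |x|^{-3} \log |x|$ for an absolute constant $C$. -/

import Mathlib

open MeasureTheory Real
noncomputable section
abbrev E3 := EuclideanSpace ℝ (Fin 3)
/-- partial derivative in direction `j` -/
def pd (j : Fin 3) (f : E3 → ℝ) (x : E3) : ℝ := fderiv ℝ f x (EuclideanSpace.single j 1)
/-- divergence of a vector field -/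
def vdiv (v : E3 → E3) (x : E3) : ℝ := ∑ j, pd j (fun y => v y j) x
/-- componentwise Laplacian (on scalars) -/
def lap (f : E3 → ℝ) (x : E3) : ℝ := ∑ j, pd j (pd j f) x
/-- curl of a vector field on ℝ³ -/
def curl (v : E3 → E3) (x : E3) : E3 :=
  WithLp.toLp 2 ![pd 1 (fun y => v y 2) x - pd 2 (fun y => v y 1) x,
    pd 2 (fun y => v y 0) x - pd 0 (fun y => v y 2) x,
    pd 0 (fun y => v y 1) x - pd 1 (fun y => v y 0) x]
/-- Gaussian heat kernel with diffusivity `c` -/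
def heatKernel (c t : ℝ) (x : E3) : ℝ :=
  (4 * Real.pi * c * t) ^ (-(3:ℝ)/2) * Real.exp (-‖x‖^2 / (4 * c * t))
/-- the weak-`L^p` quasinorm on ℝ³ -/
def wnorm3 (p : ℝ) (g : E3 → ℝ) : ℝ :=
  sSup {a : ℝ | ∃ γ : ℝ, 0 < γ ∧ a = γ * (volume {x : E3 | γ < |g x|}).toReal ^ p⁻¹}
open Set Metric

lemma vol13 : 3 * (volume (Metric.ball (0:E3) 1)).toReal ≤ 13 := by
  have hg : Real.Gamma ((3:ℝ)/2+1) = 3/4*Real.sqrt π := by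
    have h1 : (3/2+1:ℝ) = 1/2 + 1 + 1 := by norm_num
    rw [h1, Real.Gamma_add_one (by norm_num), Real.Gamma_add_one (by norm_num),
      Real.Gamma_one_half_eq]; ring
  have hv : (volume (Metric.ball (0:E3) 1)).toReal = π * (4/3) := by
    rw [EuclideanSpace.volume_ball]
    have hcard : (Fintype.card (Fin 3)) = 3 := by simp
    rw [hcard]
    have hπ : (0:ℝ) ≤ π := Real.pi_nonneg
    have hsq : Real.sqrt π ^ 3 = π * Real.sqrt π := by
      rw [pow_succ, sq_sqrt hπ]
    have hG : (↑(3:ℕ) / 2 + 1 : ℝ) = (3:ℝ)/2 + 1 := by norm_num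
    rw [hG, hg, hsq]
    have hs0 : (0:ℝ) < Real.sqrt π := Real.sqrt_pos.mpr Real.pi_pos
    rw [ENNReal.toReal_mul]
    simp only [ENNReal.ofReal_one, one_pow, ENNReal.toReal_one, one_mul]
    rw [ENNReal.toReal_ofReal (by positivity)]
    field_simp
  rw [hv]
  have := Real.pi_lt_d2
  linarith

lemma radial3 (g : ℝ → ℝ) :
    ∫ y : E3, g ‖y‖ = 3 * ((volume (Metric.ball (0:E3) 1)).toReal * ∫ r in Set.Ioi (0:ℝ), r^2 * g r) := by
  rw [MeasureTheory.integral_fun_norm_addHaar (volume : Measure E3) g, measureReal_def]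
  simp only [finrank_euclideanSpace_fin, smul_eq_mul, nsmul_eq_mul]
  norm_num

lemma ballIntegrable {c ρ : ℝ} (hc : 0 < c) :
    IntegrableOn (fun y : E3 => ((‖y‖ + c)^3)⁻¹) (Metric.ball 0 ρ) := by
  refine Measure.integrableOn_of_bounded (M := (c^3)⁻¹) measure_ball_lt_top.ne
    ((((continuous_norm.add continuous_const).pow 3).inv₀
      (fun (y : E3) => by show (‖y‖ + c)^3 ≠ 0; positivity)).aestronglyMeasurable) ?_
  · refine ae_of_all _ fun y => ?_
    rw [Real.norm_eq_abs, abs_of_nonneg (by positivity)]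
    have h1 : (0:ℝ) < c ^ 3 := by positivity
    have h2 : c ^ 3 ≤ (‖y‖ + c) ^ 3 := by
      apply pow_le_pow_left₀ hc.le; · have := norm_nonneg y; linarith
    exact inv_anti₀ h1 h2

lemma ballValue {c ρ : ℝ} (hc : 0 < c) (hρ : 0 < ρ) :
    ∫ y in Metric.ball (0:E3) ρ, ((‖y‖ + c)^3)⁻¹ ≤ 13 * (Real.log (ρ + c) - Real.log c) := by
  have hgfun : (fun y : E3 => (Metric.ball (0:E3) ρ).indicator (fun y => ((‖y‖ + c)^3)⁻¹) y)
      = fun y : E3 => (Set.Iio ρ).indicator (fun r => ((r + c)^3)⁻¹) ‖y‖ := by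
    funext y
    by_cases h : ‖y‖ < ρ <;>
      simp [Set.indicator_apply, mem_ball_zero_iff, Set.mem_Iio, h]
  have hL0 : 0 ≤ Real.log (ρ + c) - Real.log c := by
    have := Real.log_le_log hc (by linarith : c ≤ ρ + c)
    linarith
  rw [← integral_indicator measurableSet_ball, hgfun,
    radial3 (fun r => (Set.Iio ρ).indicator (fun r => ((r + c)^3)⁻¹) r)]
  -- inner 1D integral
  have hind : (fun r : ℝ => r^2 * (Set.Iio ρ).indicator (fun r => ((r + c)^3)⁻¹) r)
      = fun r : ℝ => (Set.Iio ρ).indicator (fun r => r^2 * ((r + c)^3)⁻¹) r := by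
    funext r
    by_cases h : r < ρ <;> simp [Set.indicator_apply, Set.mem_Iio, h]
  have hIv : ∫ r in Set.Ioi (0:ℝ), r^2 * (Set.Iio ρ).indicator (fun r => ((r + c)^3)⁻¹) r
      = ∫ r in Set.Ioo (0:ℝ) ρ, r^2 * ((r + c)^3)⁻¹ := by
    rw [hind, setIntegral_indicator measurableSet_Iio, Set.Ioi_inter_Iio]
  have hcont1 : ContinuousOn (fun r : ℝ => r^2 * ((r + c)^3)⁻¹) (Set.Icc 0 ρ) := by
    apply ContinuousOn.mul (by fun_prop)
    exact ((continuousOn_id.add continuousOn_const).pow 3).inv₀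
      (fun r hr => by have := hr.1; show (r + c)^3 ≠ 0; positivity)
  have hcont2 : ContinuousOn (fun r : ℝ => (r + c)⁻¹) (Set.Icc 0 ρ) :=
    (continuousOn_id.add continuousOn_const).inv₀ (fun r hr => by have := hr.1; show r + c ≠ 0; positivity)
  have hint1 : IntegrableOn (fun r : ℝ => r^2 * ((r + c)^3)⁻¹) (Set.Ioo 0 ρ) := by
    rw [← intervalIntegrable_iff_integrableOn_Ioo_of_le hρ.le]
    exact (hcont1.mono (by rw [Set.uIcc_of_le hρ.le])).intervalIntegrable
  have hint2 : IntegrableOn (fun r : ℝ => (r + c)⁻¹) (Set.Ioo 0 ρ) := by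
    rw [← intervalIntegrable_iff_integrableOn_Ioo_of_le hρ.le]
    exact (hcont2.mono (by rw [Set.uIcc_of_le hρ.le])).intervalIntegrable
  have hmono : ∫ r in Set.Ioo (0:ℝ) ρ, r^2 * ((r + c)^3)⁻¹ ≤ ∫ r in Set.Ioo (0:ℝ) ρ, (r + c)⁻¹ := by
    apply setIntegral_mono_on hint1 hint2 measurableSet_Ioo
    intro r hr
    have hr0 : 0 < r := hr.1
    have hrc : 0 < r + c := by linarith
    rw [show r^2 * ((r + c)^3)⁻¹ = r^2 / (r+c)^3 from (div_eq_mul_inv _ _).symm,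
      show (r+c)⁻¹ = 1/(r+c) from (one_div _).symm,
      div_le_div_iff₀ (by positivity) hrc]
    nlinarith [sq_nonneg r, mul_pos hr0 hc, mul_pos hc hc]
  have hlogv : ∫ r in Set.Ioo (0:ℝ) ρ, (r + c)⁻¹ = Real.log (ρ + c) - Real.log c := by
    rw [← integral_Ioc_eq_integral_Ioo, ← intervalIntegral.integral_of_le hρ.le]
    have := intervalIntegral.integral_comp_add_right (a := (0:ℝ)) (b := ρ) (fun u => u⁻¹) c
    rw [this, zero_add, integral_inv (by
      rw [Set.uIcc_of_le (by linarith : c ≤ ρ + c)]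
      intro h; exact absurd h.1 (by linarith))]
    rw [Real.log_div (by linarith) (by linarith)]
  have hI : ∫ r in Set.Ioi (0:ℝ), r^2 * (Set.Iio ρ).indicator (fun r => ((r + c)^3)⁻¹) r
      ≤ Real.log (ρ + c) - Real.log c := by rw [hIv]; linarith
  have hV : 0 ≤ (volume (Metric.ball (0:E3) 1)).toReal := ENNReal.toReal_nonneg
  nlinarith [vol13, mul_nonneg hV hL0, mul_le_mul_of_nonneg_left hI hV]

lemma tailIntegrable {R : ℝ} (hR : 8 < R) :
    Integrable (fun y : E3 =>
      ((Metric.ball (0:E3) (2*R))ᶜ).indicator (fun y => 8*((‖y‖^3)⁻¹*(‖y‖^3)⁻¹)) y) := by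
  rw [integrable_indicator_iff measurableSet_ball.compl]
  have hint : Integrable (fun y : E3 => 128 * (1 + ‖y‖) ^ (-(4:ℝ))) := by
    apply Integrable.const_mul
    apply integrable_one_add_norm (μ := (volume : Measure E3))
    rw [finrank_euclideanSpace_fin]; norm_num
  refine (hint.restrict).mono' ?_ ?_
  · apply Measurable.aestronglyMeasurable; fun_prop
  · rw [ae_restrict_iff' measurableSet_ball.compl]
    refine ae_of_all _ fun y hy => ?_
    have hy' : 2*R ≤ ‖y‖ := by
      rw [Set.mem_compl_iff, mem_ball_zero_iff, not_lt] at hy; exact hy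
    set t := ‖y‖ with ht
    have ht16 : (16:ℝ) ≤ t := by linarith
    have ht0 : (0:ℝ) < t := by linarith
    have hr4 : (1 + t) ^ (-(4:ℝ)) = ((1+t)^(4:ℕ))⁻¹ := by
      rw [Real.rpow_neg (by positivity), ← Real.rpow_natCast (1+t) 4]; norm_num
    rw [Real.norm_eq_abs, abs_of_nonneg (by positivity), hr4]
    have h1 : 8*((t^3)⁻¹*(t^3)⁻¹) = 8/(t^6) := by field_simp
    have h2 : (128:ℝ) * ((1+t)^(4:ℕ))⁻¹ = 128/(1+t)^4 := by rw [div_eq_mul_inv]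
    rw [h1, h2, div_le_div_iff₀ (by positivity) (by positivity)]
    have hp : (1+t)^4 ≤ (2*t)^4 := pow_le_pow_left₀ (by linarith) (by linarith) 4
    have hq : t^4 ≤ t^6 := pow_le_pow_right₀ (by linarith) (by norm_num)
    nlinarith

lemma tailValue {R : ℝ} (hR : 8 < R) :
    ∫ y : E3, ((Metric.ball (0:E3) (2*R))ᶜ).indicator (fun y => 8*((‖y‖^3)⁻¹*(‖y‖^3)⁻¹)) y
      ≤ 5 * (R^3)⁻¹ := by
  have hR0 : (0:ℝ) < R := by linarith
  have hgfun : (fun y : E3 => ((Metric.ball (0:E3) (2*R))ᶜ).indicator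
        (fun y => 8*((‖y‖^3)⁻¹*(‖y‖^3)⁻¹)) y)
      = fun y : E3 => (Set.Ici (2*R)).indicator (fun r => 8*((r^3)⁻¹*(r^3)⁻¹)) ‖y‖ := by
    funext y
    by_cases h : 2*R ≤ ‖y‖ <;>
      simp [Set.indicator_apply, mem_ball_zero_iff, Set.mem_Ici, h, not_le.mpr, not_lt.mpr]
  rw [hgfun, radial3]
  have hind : (fun r : ℝ => r^2 * (Set.Ici (2*R)).indicator (fun r => 8*((r^3)⁻¹*(r^3)⁻¹)) r)
      = fun r : ℝ => (Set.Ici (2*R)).indicator (fun r => r^2 * (8*((r^3)⁻¹*(r^3)⁻¹))) r := by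
    funext r
    by_cases h : 2*R ≤ r <;> simp [Set.indicator_apply, Set.mem_Ici, h]
  have hsub : Set.Ioi (0:ℝ) ∩ Set.Ici (2*R) = Set.Ici (2*R) :=
    Set.inter_eq_self_of_subset_right (fun r hr => lt_of_lt_of_le (by linarith : (0:ℝ) < 2*R) hr)
  have hIv : ∫ r in Set.Ioi (0:ℝ), r^2 * (Set.Ici (2*R)).indicator (fun r => 8*((r^3)⁻¹*(r^3)⁻¹)) r
      = ∫ r in Set.Ioi (2*R), r^2 * (8*((r^3)⁻¹*(r^3)⁻¹)) := by
    rw [hind, setIntegral_indicator measurableSet_Ici, hsub, integral_Ici_eq_integral_Ioi]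
  have hcongr : ∫ r in Set.Ioi (2*R), r^2 * (8*((r^3)⁻¹*(r^3)⁻¹))
      = ∫ r in Set.Ioi (2*R), 8 * r ^ (-(4:ℝ)) := by
    apply setIntegral_congr_fun measurableSet_Ioi
    intro r hr
    have hr0 : (0:ℝ) < r := lt_trans (by linarith) hr
    have : r ^ (-(4:ℝ)) = (r^(4:ℕ))⁻¹ := by
      rw [Real.rpow_neg hr0.le, ← Real.rpow_natCast r 4]; norm_num
    simp only []
    rw [this]; field_simp
  have hval : ∫ r in Set.Ioi (2*R), (8:ℝ) * r ^ (-(4:ℝ)) = (R^3)⁻¹ / 3 := by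
    rw [MeasureTheory.integral_const_mul, integral_Ioi_rpow_of_lt (by norm_num) (by linarith)]
    have h2R : ((2*R) : ℝ) ^ (-(4:ℝ) + 1) = ((2*R)^(3:ℕ))⁻¹ := by
      rw [show (-(4:ℝ) + 1) = -(3:ℝ) by norm_num, Real.rpow_neg (by linarith),
        ← Real.rpow_natCast (2*R) 3]; norm_num
    rw [h2R]
    have : ((2*R):ℝ)^(3:ℕ) = 8 * R^3 := by ring
    rw [this]
    field_simp
    ring
  rw [hIv, hcongr, hval]
  have hV : 0 ≤ (volume (Metric.ball (0:E3) 1)).toReal := ENNReal.toReal_nonneg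
  have h13 := vol13
  have hRp : (0:ℝ) < (R^3)⁻¹ := by positivity
  nlinarith [mul_le_mul_of_nonneg_right h13 (le_of_lt hRp)]

lemma log_big {R : ℝ} (hR : 8 < R) : 2 < Real.log R := by
  have h8 : Real.log 8 = 3 * Real.log 2 := by
    rw [show (8:ℝ) = 2^3 by norm_num, Real.log_pow]; norm_num
  have h2 := Real.log_two_gt_d9
  have := Real.log_lt_log (by norm_num : (0:ℝ) < 8) hR
  linarith

lemma inner_bound {x : E3} (hx : 8 < ‖x‖) {a b : ℝ} (ha : 0 < a) (ha1 : a ≤ 1)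
    (hb : 0 < b) (hb1 : b ≤ 1) :
    ∫ y : E3, ((‖x - y‖ + a)^3)⁻¹ * ((‖y‖ + b)^3)⁻¹
      ≤ (‖x‖^3)⁻¹ * (315 * Real.log ‖x‖ + 104 * b⁻¹ + 104 * a⁻¹) := by
  set R := ‖x‖ with hRdef
  have hR0 : (0:ℝ) < R := by linarith
  have hk0 : (0:ℝ) ≤ ((R/2)^3)⁻¹ := by positivity
  set G₁ : E3 → ℝ :=
    (Metric.ball (0:E3) (R/2)).indicator (fun y => ((R/2)^3)⁻¹ * ((‖y‖ + b)^3)⁻¹) with hG₁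
  set G₂ : E3 → ℝ :=
    (Metric.ball (0:E3) (3*R)).indicator (fun z => ((R/2)^3)⁻¹ * ((‖z‖ + a)^3)⁻¹) with hG₂
  set G₃ : E3 → ℝ :=
    ((Metric.ball (0:E3) (2*R))ᶜ).indicator (fun y => 8*((‖y‖^3)⁻¹*(‖y‖^3)⁻¹)) with hG₃
  have hG₁nn : ∀ y, 0 ≤ G₁ y := fun y => Set.indicator_nonneg (fun y _ => by positivity) y
  have hG₂nn : ∀ z, 0 ≤ G₂ z := fun z => Set.indicator_nonneg (fun z _ => by positivity) z
  have hG₃nn : ∀ y, 0 ≤ G₃ y := fun y => Set.indicator_nonneg (fun y _ => by positivity) y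
  -- integrability
  have hiG₁ : Integrable G₁ := by
    rw [hG₁, integrable_indicator_iff measurableSet_ball]
    exact (ballIntegrable hb).const_mul _
  have hiG₂ : Integrable G₂ := by
    rw [hG₂, integrable_indicator_iff measurableSet_ball]
    exact (ballIntegrable ha).const_mul _
  have hiG₂' : Integrable (fun y => G₂ (x - y)) := hiG₂.comp_sub_left x
  have hiG₃ : Integrable G₃ := tailIntegrable hx
  -- pointwise bound
  have hfM : ∀ y : E3, ((‖x - y‖ + a)^3)⁻¹ * ((‖y‖ + b)^3)⁻¹ ≤ G₁ y + G₂ (x - y) + G₃ y := by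
    intro y
    rcases lt_or_ge ‖y‖ (R/2) with h1 | h1
    · have hmem : y ∈ Metric.ball (0:E3) (R/2) := mem_ball_zero_iff.mpr h1
      have hxy : R/2 ≤ ‖x - y‖ + a := by
        have h2 : ‖x‖ - ‖y‖ ≤ ‖x - y‖ := norm_sub_norm_le x y
        linarith
      have hle : ((‖x - y‖ + a)^3)⁻¹ * ((‖y‖ + b)^3)⁻¹ ≤ G₁ y := by
        rw [hG₁, Set.indicator_of_mem hmem]
        apply mul_le_mul_of_nonneg_right _ (by positivity)
        exact inv_anti₀ (by positivity) (pow_le_pow_left₀ (by positivity) hxy 3)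
      have := hG₂nn (x - y); have := hG₃nn y; linarith
    · rcases lt_or_ge ‖y‖ (2*R) with h2 | h2
      · have hmem : x - y ∈ Metric.ball (0:E3) (3*R) := by
          rw [mem_ball_zero_iff]
          have := norm_sub_le x y
          linarith
        have hle : ((‖x - y‖ + a)^3)⁻¹ * ((‖y‖ + b)^3)⁻¹ ≤ G₂ (x - y) := by
          rw [hG₂, Set.indicator_of_mem hmem, mul_comm (((R/2)^3)⁻¹) _]
          apply mul_le_mul_of_nonneg_left _ (by positivity)
          apply inv_anti₀ (by positivity)
          apply pow_le_pow_left₀ (by positivity)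
          linarith
        have := hG₁nn y; have := hG₃nn y; linarith
      · have hmem : y ∈ (Metric.ball (0:E3) (2*R))ᶜ := by
          rw [Set.mem_compl_iff, mem_ball_zero_iff, not_lt]; exact h2
        have hy0 : (0:ℝ) < ‖y‖ := by linarith
        have hle : ((‖x - y‖ + a)^3)⁻¹ * ((‖y‖ + b)^3)⁻¹ ≤ G₃ y := by
          rw [hG₃, Set.indicator_of_mem hmem]
          have hxy : ‖y‖/2 ≤ ‖x - y‖ + a := by
            have h3 : ‖y‖ - ‖x‖ ≤ ‖y - x‖ := norm_sub_norm_le y x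
            rw [norm_sub_rev] at h3
            linarith
          have hf1 : ((‖x - y‖ + a)^3)⁻¹ ≤ 8 * (‖y‖^3)⁻¹ := by
            have heq : ((‖y‖/2)^3)⁻¹ = 8 * (‖y‖^3)⁻¹ := by
              rw [div_pow]; rw [inv_div]; ring_nf
            rw [← heq]
            exact inv_anti₀ (by positivity) (pow_le_pow_left₀ (by positivity) hxy 3)
          have hf2 : ((‖y‖ + b)^3)⁻¹ ≤ (‖y‖^3)⁻¹ := by
            exact inv_anti₀ (by positivity) (pow_le_pow_left₀ (by positivity) (by linarith) 3)
          calc ((‖x - y‖ + a)^3)⁻¹ * ((‖y‖ + b)^3)⁻¹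
              ≤ (8 * (‖y‖^3)⁻¹) * (‖y‖^3)⁻¹ :=
                mul_le_mul hf1 hf2 (by positivity) (by positivity)
            _ = 8*((‖y‖^3)⁻¹*(‖y‖^3)⁻¹) := by ring
        have := hG₁nn y; have := hG₂nn (x - y); linarith
  -- bound the integral
  have hmono : ∫ y : E3, ((‖x - y‖ + a)^3)⁻¹ * ((‖y‖ + b)^3)⁻¹
      ≤ ∫ y : E3, (G₁ y + G₂ (x - y) + G₃ y) := by
    apply integral_mono_of_nonneg (ae_of_all _ fun y => by positivity)
      ((hiG₁.add hiG₂').add hiG₃) (ae_of_all _ hfM)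
  have hsplit : ∫ y : E3, (G₁ y + G₂ (x - y) + G₃ y)
      = (∫ y : E3, G₁ y) + (∫ y : E3, G₂ (x - y)) + (∫ y : E3, G₃ y) := by
    have h12 : Integrable (fun y : E3 => G₁ y + G₂ (x - y)) volume := hiG₁.add hiG₂'
    rw [integral_add h12 hiG₃, integral_add hiG₁ hiG₂']
  have hT2tr : ∫ y : E3, G₂ (x - y) = ∫ z : E3, G₂ z := integral_sub_left_eq_self G₂ volume x
  -- term 1
  have hT1 : ∫ y : E3, G₁ y ≤ ((R/2)^3)⁻¹ * (13 * (Real.log (R/2 + b) - Real.log b)) := by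
    rw [hG₁, integral_indicator measurableSet_ball, MeasureTheory.integral_const_mul]
    exact mul_le_mul_of_nonneg_left (ballValue hb (by linarith)) hk0
  have hT2 : ∫ z : E3, G₂ z ≤ ((R/2)^3)⁻¹ * (13 * (Real.log (3*R + a) - Real.log a)) := by
    rw [hG₂, integral_indicator measurableSet_ball, MeasureTheory.integral_const_mul]
    exact mul_le_mul_of_nonneg_left (ballValue ha (by linarith)) hk0
  have hT3 : ∫ y : E3, G₃ y ≤ 5 * (R^3)⁻¹ := tailValue hx
  -- log estimates
  have hlog1 : Real.log (R/2 + b) ≤ Real.log R :=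
    Real.log_le_log (by positivity) (by linarith)
  have hlog2 : Real.log (3*R + a) ≤ 2 * Real.log R := by
    have h3 : 3*R + a ≤ R^2 := by nlinarith
    have := Real.log_le_log (by positivity) h3
    rw [Real.log_pow] at this
    push_cast at this
    linarith
  have hlb : -Real.log b ≤ b⁻¹ := by
    have := Real.log_le_sub_one_of_pos (show (0:ℝ) < b⁻¹ by positivity)
    rw [Real.log_inv] at this
    linarith
  have hla : -Real.log a ≤ a⁻¹ := by
    have := Real.log_le_sub_one_of_pos (show (0:ℝ) < a⁻¹ by positivity)
    rw [Real.log_inv] at this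
    linarith
  have hkval : ((R/2)^3)⁻¹ = 8 * (R^3)⁻¹ := by
    rw [div_pow, inv_div]; ring_nf
  have hlogR : 2 < Real.log R := log_big hx
  have hRp : (0:ℝ) < (R^3)⁻¹ := by positivity
  have hbi : (0:ℝ) < b⁻¹ := by positivity
  have hai : (0:ℝ) < a⁻¹ := by positivity
  calc ∫ y : E3, ((‖x - y‖ + a)^3)⁻¹ * ((‖y‖ + b)^3)⁻¹
      ≤ (∫ y : E3, G₁ y) + (∫ y : E3, G₂ (x - y)) + (∫ y : E3, G₃ y) := by
        rw [← hsplit]; exact hmono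
    _ ≤ ((R/2)^3)⁻¹ * (13 * (Real.log (R/2 + b) - Real.log b))
        + ((R/2)^3)⁻¹ * (13 * (Real.log (3*R + a) - Real.log a)) + 5 * (R^3)⁻¹ := by
        rw [hT2tr]; exact add_le_add (add_le_add hT1 hT2) hT3
    _ ≤ (R^3)⁻¹ * (315 * Real.log R + 104 * b⁻¹ + 104 * a⁻¹) := by
        rw [hkval]
        nlinarith [mul_le_mul_of_nonneg_left hlog1 hRp.le, mul_le_mul_of_nonneg_left hlog2 hRp.le,
          mul_le_mul_of_nonneg_left hlb hRp.le, mul_le_mul_of_nonneg_left hla hRp.le,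
          mul_le_mul_of_nonneg_left hlogR.le hRp.le]

lemma sqrtInv_integrableOn : IntegrableOn (fun s : ℝ => (Real.sqrt s)⁻¹) (Set.Ioo 0 1) := by
  have h0 : IntegrableOn (fun s : ℝ => s ^ (-(1/2) : ℝ)) (Set.Ioo 0 1) :=
    (intervalIntegrable_iff_integrableOn_Ioo_of_le (by norm_num)).1
      (intervalIntegral.intervalIntegrable_rpow' (by norm_num))
  exact (h0.congr_fun (fun s hs => by
    rw [Real.sqrt_eq_rpow, ← Real.rpow_neg hs.1.le]) measurableSet_Ioo).mono_set le_rfl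

lemma sqrtInv_one_sub_integrableOn :
    IntegrableOn (fun s : ℝ => (Real.sqrt (1 - s))⁻¹) (Set.Ioo 0 1) := by
  have h0 : IntervalIntegrable (fun s : ℝ => ((1 - s) : ℝ) ^ (-(1/2) : ℝ)) volume 0 1 := by
    have := (intervalIntegral.intervalIntegrable_rpow'
      (a := 0) (b := 1) (r := -(1/2)) (by norm_num)).comp_sub_left 1
    simpa using this.symm
  have h1 : IntegrableOn (fun s : ℝ => ((1 - s) : ℝ) ^ (-(1/2) : ℝ)) (Set.Ioo 0 1) :=
    (intervalIntegrable_iff_integrableOn_Ioo_of_le (by norm_num)).1 h0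
  exact h1.congr_fun (fun s hs => by
    rw [Real.sqrt_eq_rpow, ← Real.rpow_neg (by linarith [hs.2] : (0:ℝ) ≤ 1 - s)])
    measurableSet_Ioo

lemma sqrtInv_integral : ∫ s in Set.Ioo (0:ℝ) 1, (Real.sqrt s)⁻¹ = 2 := by
  have hcg : ∫ s in Set.Ioo (0:ℝ) 1, (Real.sqrt s)⁻¹
      = ∫ s in Set.Ioo (0:ℝ) 1, s ^ (-(1/2) : ℝ) := by
    apply setIntegral_congr_fun measurableSet_Ioo
    intro s hs
    show (Real.sqrt s)⁻¹ = s ^ (-(1/2) : ℝ)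
    rw [Real.sqrt_eq_rpow, ← Real.rpow_neg hs.1.le]
  rw [hcg, ← integral_Ioc_eq_integral_Ioo, ← intervalIntegral.integral_of_le zero_le_one,
    integral_rpow (Or.inl (by norm_num))]
  rw [Real.one_rpow, Real.zero_rpow (by norm_num)]
  norm_num

lemma sqrtInv_one_sub_integral : ∫ s in Set.Ioo (0:ℝ) 1, (Real.sqrt (1 - s))⁻¹ = 2 := by
  have hcg : ∫ s in Set.Ioo (0:ℝ) 1, (Real.sqrt (1-s))⁻¹
      = ∫ s in Set.Ioo (0:ℝ) 1, (1-s) ^ (-(1/2) : ℝ) := by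
    apply setIntegral_congr_fun measurableSet_Ioo
    intro s hs
    show (Real.sqrt (1-s))⁻¹ = (1-s) ^ (-(1/2) : ℝ)
    rw [Real.sqrt_eq_rpow, ← Real.rpow_neg (by linarith [hs.2] : (0:ℝ) ≤ 1 - s)]
  rw [hcg, ← integral_Ioc_eq_integral_Ioo, ← intervalIntegral.integral_of_le zero_le_one]
  have := intervalIntegral.integral_comp_sub_left (a := (0:ℝ)) (b := 1)
    (fun u : ℝ => u ^ (-(1/2) : ℝ)) 1
  simp only [sub_zero, sub_self] at this
  rw [this, integral_rpow (Or.inl (by norm_num)), Real.one_rpow, Real.zero_rpow (by norm_num)]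
  norm_num


theorem stmt14 :
    ∃ C : ℝ, 0 < C ∧ ∀ x : E3, 8 < ‖x‖ →
      (∫ s in Set.Ioo (0:ℝ) 1, ∫ y : E3,
          ((‖x - y‖ + Real.sqrt (1 - s)) ^ 3)⁻¹ * ((‖y‖ + Real.sqrt s) ^ 3)⁻¹)
        ≤ C * ‖x‖ ^ (-(3:ℝ)) * Real.log ‖x‖ := by
  refine ⟨600, by norm_num, fun x hx => ?_⟩
  set R := ‖x‖ with hRdef
  have hR0 : (0:ℝ) < R := by linarith
  have hlogR : 2 < Real.log R := log_big hx
  set g : ℝ → ℝ :=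
    fun s => (R^3)⁻¹ * (315 * Real.log R + 104 * ((Real.sqrt s)⁻¹ + (Real.sqrt (1 - s))⁻¹))
    with hg
  have hgint : IntegrableOn g (Set.Ioo (0:ℝ) 1) := by
    apply Integrable.const_mul
    apply Integrable.add
    · exact integrableOn_const (by simp [Real.volume_Ioo])
    · exact (sqrtInv_integrableOn.add sqrtInv_one_sub_integrableOn).const_mul _
  have hkey : ∀ s ∈ Set.Ioo (0:ℝ) 1,
      (∫ y : E3, ((‖x - y‖ + Real.sqrt (1 - s)) ^ 3)⁻¹ * ((‖y‖ + Real.sqrt s) ^ 3)⁻¹) ≤ g s := by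
    intro s hs
    have h1 : (0:ℝ) < Real.sqrt (1 - s) := Real.sqrt_pos.mpr (by linarith [hs.2])
    have h2 : Real.sqrt (1 - s) ≤ 1 := Real.sqrt_le_one.mpr (by linarith [hs.1])
    have h3 : (0:ℝ) < Real.sqrt s := Real.sqrt_pos.mpr hs.1
    have h4 : Real.sqrt s ≤ 1 := Real.sqrt_le_one.mpr (by linarith [hs.2])
    have := inner_bound hx h1 h2 h3 h4
    rw [hg]
    calc (∫ y : E3, ((‖x - y‖ + Real.sqrt (1 - s)) ^ 3)⁻¹ * ((‖y‖ + Real.sqrt s) ^ 3)⁻¹)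
        ≤ (R^3)⁻¹ * (315 * Real.log R + 104 * (Real.sqrt s)⁻¹ + 104 * (Real.sqrt (1-s))⁻¹) := this
      _ = (R^3)⁻¹ * (315 * Real.log R + 104 * ((Real.sqrt s)⁻¹ + (Real.sqrt (1 - s))⁻¹)) := by
          ring
  have hmono : (∫ s in Set.Ioo (0:ℝ) 1, ∫ y : E3,
        ((‖x - y‖ + Real.sqrt (1 - s)) ^ 3)⁻¹ * ((‖y‖ + Real.sqrt s) ^ 3)⁻¹)
      ≤ ∫ s in Set.Ioo (0:ℝ) 1, g s := by
    apply integral_mono_of_nonneg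
    · exact ae_of_all _ fun s => integral_nonneg fun y => by positivity
    · exact hgint
    · exact (ae_restrict_iff' measurableSet_Ioo).2 (ae_of_all _ hkey)
  have hgval : ∫ s in Set.Ioo (0:ℝ) 1, g s = (R^3)⁻¹ * (315 * Real.log R + 416) := by
    have hconst : IntegrableOn (fun _ : ℝ => 315 * Real.log R) (Set.Ioo 0 1) :=
      integrableOn_const (by simp [Real.volume_Ioo])
    have hsum : IntegrableOn (fun s : ℝ => (Real.sqrt s)⁻¹ + (Real.sqrt (1-s))⁻¹)
        (Set.Ioo 0 1) := sqrtInv_integrableOn.add sqrtInv_one_sub_integrableOn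
    have h104 : IntegrableOn (fun s : ℝ => 104 * ((Real.sqrt s)⁻¹ + (Real.sqrt (1-s))⁻¹))
        (Set.Ioo 0 1) := hsum.const_mul _
    rw [hg]
    rw [MeasureTheory.integral_const_mul]
    congr 1
    rw [integral_add hconst h104, MeasureTheory.integral_const_mul,
      MeasureTheory.integral_const_mul,
      integral_add sqrtInv_integrableOn sqrtInv_one_sub_integrableOn,
      sqrtInv_integral, sqrtInv_one_sub_integral, setIntegral_const]
    simp [Real.volume_Ioo]
    ring
  have hrpow : R ^ (-(3:ℝ)) = (R^3)⁻¹ := by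
    rw [Real.rpow_neg hR0.le, ← Real.rpow_natCast R 3]
    norm_num
  rw [hrpow]
  calc (∫ s in Set.Ioo (0:ℝ) 1, ∫ y : E3,
        ((‖x - y‖ + Real.sqrt (1 - s)) ^ 3)⁻¹ * ((‖y‖ + Real.sqrt s) ^ 3)⁻¹)
      ≤ (R^3)⁻¹ * (315 * Real.log R + 416) := by rw [← hgval]; exact hmono
    _ ≤ 600 * (R^3)⁻¹ * Real.log R := by
        have hRp : (0:ℝ) < (R^3)⁻¹ := by positivity
        nlinarith [mul_le_mul_of_nonneg_left hlogR.le hRp.le]
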